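/- Let C_n be the cycle on n ≥ 3 vertices and let X_{C_n} be the number of vertices with nonzero in-degree after a random orientation of the edges of C_n. Then H(X_{C_n}) ≥ H(Bin(n−1, 1/2)) − 1, where Bin(n−1, 1/2) is a binomial random variable with n−1 trials and success probability 1/2. -/

import Mathlib

open Finset

/-- Shannon entropy (base 2) of a random variable `X` defined on a finite sample space
with probability mass function `p`:  `H(X) = -∑_s P[X = s] log₂ P[X = s]`. -/
noncomputable def shannonEntropy {Ω S : Type*} [Fintype Ω] [DecidableEq S]
    (p : Ω → ℝ) (X : Ω → S) : ℝ :=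
  -∑ s ∈ Finset.univ.image X,
      (∑ ω ∈ Finset.univ.filter (fun ω => X ω = s), p ω) *
        Real.logb 2 (∑ ω ∈ Finset.univ.filter (fun ω => X ω = s), p ω)

/-- Shannon entropy (base 2) of a `Binomial(m, 1/2)` random variable, which takes each
value `k ∈ {0, …, m}` with probability `(m.choose k) / 2 ^ m`. -/
noncomputable def binomialEntropy (m : ℕ) : ℝ :=
  -∑ k ∈ Finset.range (m + 1),
      ((m.choose k : ℝ) / 2 ^ m) * Real.logb 2 ((m.choose k : ℝ) / 2 ^ m)

set_option linter.unusedSectionVars false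

section EntLemmas
variable {Ω S T : Type*} [Fintype Ω] [DecidableEq S] [DecidableEq T]

lemma two_entropy_aux (a b : ℝ) (ha : 0 ≤ a) (hb : 0 ≤ b) :
    -(a * Real.logb 2 a) + -(b * Real.logb 2 b) ≤
      -((a + b) * Real.logb 2 (a + b)) + (a + b) := by
  have hL : 0 < Real.log 2 := Real.log_pos one_lt_two
  rcases eq_or_lt_of_le ha with h0 | ha'
  · simp [← h0, hb]
  rcases eq_or_lt_of_le hb with h0 | hb'
  · simp [← h0, ha]
  have hs : 0 < a + b := by linarith
  have h1 : a * Real.log ((a+b)/(2*a)) ≤ a * ((a+b)/(2*a) - 1) :=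
    mul_le_mul_of_nonneg_left (Real.log_le_sub_one_of_pos (by positivity)) ha
  have h2 : b * Real.log ((a+b)/(2*b)) ≤ b * ((a+b)/(2*b) - 1) :=
    mul_le_mul_of_nonneg_left (Real.log_le_sub_one_of_pos (by positivity)) hb
  have e1 : Real.log ((a+b)/(2*a)) = Real.log (a+b) - Real.log 2 - Real.log a := by
    rw [Real.log_div hs.ne' (by positivity), Real.log_mul (by norm_num) ha'.ne']; ring
  have e2 : Real.log ((a+b)/(2*b)) = Real.log (a+b) - Real.log 2 - Real.log b := by
    rw [Real.log_div hs.ne' (by positivity), Real.log_mul (by norm_num) hb'.ne']; ring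
  have r1 : a * ((a+b)/(2*a) - 1) = (a+b)/2 - a := by field_simp
  have r2 : b * ((a+b)/(2*b) - 1) = (a+b)/2 - b := by field_simp
  rw [e1, r1] at h1
  rw [e2, r2] at h2
  have key : (a+b) * Real.log (a+b) ≤ (a+b) * Real.log 2 + a * Real.log a + b * Real.log b := by
    nlinarith [h1, h2]
  simp only [Real.logb]
  rw [← sub_nonneg]
  have expand : -((a + b) * (Real.log (a+b) / Real.log 2)) + (a + b) -
      (-(a * (Real.log a / Real.log 2)) + -(b * (Real.log b / Real.log 2)))
      = ((a+b) * Real.log 2 + a * Real.log a + b * Real.log b - (a+b) * Real.log (a+b)) / Real.log 2 := by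
    field_simp
    ring
  rw [expand]
  apply div_nonneg _ hL.le
  linarith

lemma sum_neg_mul_logb_le (G : Finset S) (hG : G.card ≤ 2) (q : S → ℝ)
    (hq : ∀ s ∈ G, 0 ≤ q s) :
    ∑ s ∈ G, -(q s * Real.logb 2 (q s)) ≤
      -((∑ s ∈ G, q s) * Real.logb 2 (∑ s ∈ G, q s)) + ∑ s ∈ G, q s := by
  interval_cases h : G.card
  · rw [Finset.card_eq_zero.mp h]; simp
  · obtain ⟨a, rfl⟩ := Finset.card_eq_one.mp h
    simp only [Finset.sum_singleton]
    have := hq a (by simp)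
    linarith
  · obtain ⟨a, b, hab, rfl⟩ := Finset.card_eq_two.mp h
    simp only [Finset.sum_pair hab]
    exact two_entropy_aux (q a) (q b) (hq a (by simp)) (hq b (by simp))

lemma shannonEntropy_eq_sum_omega (p : Ω → ℝ) (Z : Ω → S) :
    shannonEntropy p Z =
      -∑ ω : Ω, p ω * Real.logb 2 (∑ ω' ∈ Finset.univ.filter (fun ω' => Z ω' = Z ω), p ω') := by
  unfold shannonEntropy
  congr 1
  rw [← Finset.sum_fiberwise_of_maps_to (g := Z)
      (fun ω _ => Finset.mem_image_of_mem Z (Finset.mem_univ ω))]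
  refine Finset.sum_congr rfl fun s hs => ?_
  rw [Finset.sum_mul]
  refine Finset.sum_congr rfl fun ω hω => ?_
  rw [(Finset.mem_filter.mp hω).2]

lemma shannonEntropy_comp_le (p : Ω → ℝ) (hp : ∀ ω, 0 ≤ p ω) (Z : Ω → S) (f : S → T) :
    shannonEntropy p (fun ω => f (Z ω)) ≤ shannonEntropy p Z := by
  rw [shannonEntropy_eq_sum_omega, shannonEntropy_eq_sum_omega, neg_le_neg_iff]
  apply Finset.sum_le_sum
  intro ω _
  rcases eq_or_lt_of_le (hp ω) with h0 | hpos
  · simp [← h0]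
  apply mul_le_mul_of_nonneg_left _ (hp ω)
  have hq1 : 0 < ∑ ω' ∈ Finset.univ.filter (fun ω' => Z ω' = Z ω), p ω' :=
    lt_of_lt_of_le hpos (Finset.single_le_sum (fun i _ => hp i) (by simp))
  apply Real.logb_le_logb_of_le one_lt_two hq1
  apply Finset.sum_le_sum_of_subset_of_nonneg
  · intro ω' hω'
    simp only [Finset.mem_filter, Finset.mem_univ, true_and] at hω' ⊢
    rw [hω']
  · exact fun i _ _ => hp i

end EntLemmas

section L2
variable {Ω S T : Type*} [Fintype Ω] [DecidableEq S] [DecidableEq T]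

lemma shannonEntropy_le_comp_add_one (p : Ω → ℝ) (hp : ∀ ω, 0 ≤ p ω)
    (hsum : ∑ ω : Ω, p ω = 1) (Z : Ω → S) (f : S → T)
    (hc : ∀ t : T, ((Finset.univ.image Z).filter (fun s => f s = t)).card ≤ 2) :
    shannonEntropy p Z ≤ shannonEntropy p (fun ω => f (Z ω)) + 1 := by
  classical
  set q : S → ℝ := fun s => ∑ ω ∈ Finset.univ.filter (fun ω => Z ω = s), p ω with hqdef
  set q' : T → ℝ := fun t => ∑ ω ∈ Finset.univ.filter (fun ω => f (Z ω) = t), p ω with hq'def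
  have regroup : ∀ t, q' t = ∑ s ∈ (Finset.univ.image Z).filter (fun s => f s = t), q s := by
    intro t
    rw [hq'def]
    dsimp only
    rw [← Finset.sum_fiberwise_of_maps_to (g := Z)
        (t := (Finset.univ.image Z).filter (fun s => f s = t))
        (fun ω hω => Finset.mem_filter.mpr
          ⟨Finset.mem_image_of_mem Z (Finset.mem_univ ω), (Finset.mem_filter.mp hω).2⟩) p]
    refine Finset.sum_congr rfl fun s hs => ?_
    rw [hqdef]
    dsimp only
    congr 1
    have hfs : f s = t := (Finset.mem_filter.mp hs).2
    ext ω
    simp only [Finset.mem_filter, Finset.mem_univ, true_and]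
    constructor
    · rintro ⟨-, h⟩; exact h
    · rintro h; exact ⟨by rw [h, hfs], h⟩
  have tot : ∑ t ∈ Finset.univ.image (fun ω => f (Z ω)), q' t = 1 := by
    rw [hq'def]
    dsimp only
    rw [Finset.sum_fiberwise_of_maps_to
      (fun ω _ => Finset.mem_image_of_mem _ (Finset.mem_univ ω)) p]
    exact hsum
  have himg : ∀ s ∈ Finset.univ.image Z, f s ∈ Finset.univ.image (fun ω => f (Z ω)) := by
    intro s hs
    obtain ⟨ω, -, rfl⟩ := Finset.mem_image.mp hs
    exact Finset.mem_image_of_mem _ (Finset.mem_univ ω)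
  calc shannonEntropy p Z
      = ∑ s ∈ Finset.univ.image Z, -(q s * Real.logb 2 (q s)) := by
        unfold shannonEntropy; rw [Finset.sum_neg_distrib]
    _ = ∑ t ∈ Finset.univ.image (fun ω => f (Z ω)),
          ∑ s ∈ (Finset.univ.image Z).filter (fun s => f s = t),
            -(q s * Real.logb 2 (q s)) :=
        (Finset.sum_fiberwise_of_maps_to himg _).symm
    _ ≤ ∑ t ∈ Finset.univ.image (fun ω => f (Z ω)),
          (-(q' t * Real.logb 2 (q' t)) + q' t) := by
        apply Finset.sum_le_sum
        intro t _
        rw [regroup t]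
        exact sum_neg_mul_logb_le _ (hc t) q
          (fun s _ => Finset.sum_nonneg fun ω _ => hp ω)
    _ = -(∑ t ∈ Finset.univ.image (fun ω => f (Z ω)), q' t * Real.logb 2 (q' t))
          + ∑ t ∈ Finset.univ.image (fun ω => f (Z ω)), q' t := by
        rw [Finset.sum_add_distrib, Finset.sum_neg_distrib]
    _ = shannonEntropy p (fun ω => f (Z ω)) + 1 := by
        rw [tot]; rfl

end L2

section Cycle
variable (n : ℕ) [NeZero n]

abbrev Orient := {g : ZMod n → ZMod n // ∀ i, g i = i ∨ g i = i + 1}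

def eps (g : Orient n) (i : ZMod n) : Bool := decide (g.1 i = i + 1)

lemma self_ne_add_one (hn : 3 ≤ n) (i : ZMod n) : i ≠ i + 1 := by
  haveI : Fact (1 < n) := ⟨by omega⟩
  rw [Ne, left_eq_add]
  exact one_ne_zero

lemma eps_true_iff (g : Orient n) (i : ZMod n) :
    eps n g i = true ↔ g.1 i = i + 1 := by
  unfold eps; exact decide_eq_true_iff

lemma eps_false_iff (hn : 3 ≤ n) (g : Orient n) (i : ZMod n) :
    eps n g i = false ↔ g.1 i = i := by
  rcases g.2 i with h | h
  · constructor
    · intro _; exact h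
    · intro _
      rw [← Bool.not_eq_true, eps_true_iff, h]
      exact (self_ne_add_one n hn i)
  · constructor
    · intro hf
      rw [← Bool.not_eq_true, eps_true_iff] at hf
      exact absurd h hf
    · intro h'
      rw [h'] at h
      exact absurd h (self_ne_add_one n hn i)

def orientEquiv (hn : 3 ≤ n) : Orient n ≃ (ZMod n → Bool) where
  toFun g := eps n g
  invFun b := ⟨fun i => if b i then i + 1 else i, fun i => by by_cases h : b i <;> simp [h]⟩
  left_inv g := by
    apply Subtype.ext; funext i
    rcases g.2 i with h | h
    · have : eps n g i = false := (eps_false_iff n hn g i).mpr h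
      simp [this, h]
    · have : eps n g i = true := (eps_true_iff n g i).mpr h
      simp [this, h]
  right_inv b := by
    funext i
    by_cases h : b i
    · simp only [h, if_true]
      rw [eps_true_iff]
      simp [h]
    · simp only [h, Bool.false_eq_true, if_false]
      rw [eps_false_iff n hn]
      simp [h]

def Yb (b : ZMod n → Bool) : ℕ :=
  ((Finset.range (n-1)).filter fun k => b ((k : ℕ) : ZMod n) ≠ b (((k : ℕ) + 1 : ℕ) : ZMod n)).card

def weight {m : ℕ} (d : Fin m → Bool) : ℕ := (Finset.univ.filter fun i => d i = true).card

def rec0 (c : Bool) (d : ℕ → Bool) : ℕ → Bool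
  | 0 => c
  | k+1 => xor (rec0 c d k) (d k)

def cdEquiv : (ZMod n → Bool) ≃ Bool × (Fin (n-1) → Bool) where
  toFun b := (b 0, fun i => xor (b ((i : ℕ) : ZMod n)) (b (((i : ℕ) + 1 : ℕ) : ZMod n)))
  invFun cd := fun j => rec0 cd.1 (fun k => if h : k < n-1 then cd.2 ⟨k, h⟩ else false) j.val
  left_inv b := by
    funext j
    dsimp only
    have key : ∀ k, k < n →
        rec0 (b 0) (fun k => if h : k < n-1 then
          xor (b ((k : ℕ) : ZMod n)) (b (((k : ℕ) + 1 : ℕ) : ZMod n)) else false) k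
          = b ((k : ℕ) : ZMod n) := by
      intro k
      induction k with
      | zero => intro _; simp [rec0]
      | succ m ih =>
        intro hm
        have hm' : m < n - 1 := by omega
        rw [rec0, ih (by omega), dif_pos hm']
        cases hb : b ((m : ℕ) : ZMod n) <;> cases hb' : b (((m : ℕ) + 1 : ℕ) : ZMod n) <;>
          simp [hb, hb']
    have hj : ((j.val : ℕ) : ZMod n) = j := ZMod.natCast_rightInverse j
    conv_rhs => rw [← hj]
    exact key j.val (ZMod.val_lt j)
  right_inv cd := by
    have hval : ∀ k, k < n → (((k : ℕ) : ZMod n)).val = k := fun k hk => ZMod.val_cast_of_lt hk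
    ext1
    · dsimp only
      rw [show ((0 : ZMod n)).val = 0 from ZMod.val_zero, rec0]
    · funext i
      dsimp only
      have h1 : (i : ℕ) < n := lt_of_lt_of_le i.isLt (Nat.sub_le n 1)
      have h2 : (i : ℕ) + 1 < n := by have := i.isLt; omega
      rw [hval _ h1, hval _ h2, rec0, dif_pos i.isLt]
      cases hr : rec0 cd.1 (fun k => if h : k < n - 1 then cd.2 ⟨k, h⟩ else false) (i : ℕ) <;>
        cases hd : cd.2 ⟨(i : ℕ), i.isLt⟩ <;> simp [hr, hd]

lemma weight_count (m k : ℕ) :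
    (Finset.univ.filter fun d : Fin m → Bool => weight d = k).card = m.choose k := by
  have hpc := Finset.card_powersetCard k (Finset.univ : Finset (Fin m))
  rw [Finset.card_univ, Fintype.card_fin] at hpc
  rw [← hpc]
  refine Finset.card_nbij' (fun d => Finset.univ.filter fun i => d i = true)
    (fun s => fun i => decide (i ∈ s)) ?_ ?_ ?_ ?_
  · intro d hd
    rw [Finset.mem_coe] at hd ⊢
    rw [Finset.mem_powersetCard]
    exact ⟨Finset.filter_subset _ _, (Finset.mem_filter.mp hd).2⟩
  · intro s hs
    rw [Finset.mem_coe] at hs ⊢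
    rw [Finset.mem_filter]
    refine ⟨Finset.mem_univ _, ?_⟩
    have hset : (Finset.univ.filter fun i => decide (i ∈ s) = true) = s := by
      ext i; simp
    unfold weight
    rw [hset]
    exact (Finset.mem_powersetCard.mp hs).2
  · intro d _; funext i; simp
  · intro s _; ext i; simp

lemma card_filter_equiv {α β : Type*} [Fintype α] [Fintype β] [DecidableEq α] [DecidableEq β]
    (e : α ≃ β) (p : β → Prop) [DecidablePred p] :
    (Finset.univ.filter fun a => p (e a)).card = (Finset.univ.filter p).card :=
  Finset.card_equiv e (by simp)

lemma Yb_eq_weight (b : ZMod n → Bool) : Yb n b = weight ((cdEquiv n b).2) := by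
  unfold Yb weight cdEquiv
  dsimp only [Equiv.coe_fn_mk]
  rw [Finset.card_filter, Finset.card_filter, ← Fin.sum_univ_eq_sum_range
    (fun k => if b ((k : ℕ) : ZMod n) ≠ b (((k : ℕ) + 1 : ℕ) : ZMod n) then 1 else 0) (n-1)]
  refine Finset.sum_congr rfl fun i _ => ?_
  obtain hb | hb := Bool.eq_false_or_eq_true (b ((i : ℕ) : ZMod n)) <;>
    obtain hb' | hb' := Bool.eq_false_or_eq_true (b (((i : ℕ) + 1 : ℕ) : ZMod n)) <;>
    simp [hb, hb']

lemma Yb_count (k : ℕ) :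
    (Finset.univ.filter fun b : ZMod n → Bool => Yb n b = k).card
      = 2 * (n-1).choose k := by
  have h1 : (Finset.univ.filter fun b : ZMod n → Bool => Yb n b = k)
      = (Finset.univ.filter fun b : ZMod n → Bool => weight ((cdEquiv n b).2) = k) := by
    apply Finset.filter_congr
    intro b _
    rw [Yb_eq_weight]
  rw [h1, card_filter_equiv (cdEquiv n) (fun cd => weight cd.2 = k)]
  have h2 : (Finset.univ.filter fun cd : Bool × (Fin (n-1) → Bool) => weight cd.2 = k)
      = (Finset.univ : Finset Bool) ×ˢ (Finset.univ.filter fun d : Fin (n-1) → Bool => weight d = k) := by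
    ext ⟨c, d⟩
    simp [Finset.mem_product]
  rw [h2, Finset.card_product, weight_count]
  simp

lemma orient_count (hn : 3 ≤ n) (k : ℕ) :
    (Finset.univ.filter fun g : Orient n => Yb n (eps n g) = k).card
      = 2 * (n-1).choose k := by
  exact (card_filter_equiv (orientEquiv n hn) (fun b => Yb n b = k)).trans (Yb_count n k)

lemma orient_card (hn : 3 ≤ n) : Fintype.card (Orient n) = 2 ^ n := by
  rw [Fintype.card_congr (orientEquiv n hn), Fintype.card_fun, Fintype.card_bool, ZMod.card]

lemma card_shift (b : ZMod n → Bool) :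
    (Finset.univ.filter fun i : ZMod n => b (i+1) = true).card
      = (Finset.univ.filter fun i : ZMod n => b i = true).card := by
  refine Finset.card_nbij' (fun i => i + 1) (fun i => i - 1) ?_ ?_ ?_ ?_ <;>
    intro i hi <;>
    simp only [Finset.mem_coe, Finset.mem_filter, Finset.mem_univ, true_and] at *
  · exact hi
  · rw [sub_add_cancel]; exact hi
  · exact add_sub_cancel_right i 1
  · exact sub_add_cancel i 1

lemma Ynum_eq (hn : 3 ≤ n) (g : Orient n) :
    Yb n (eps n g) =
      2 * (n - (Finset.univ.filter fun v : ZMod n => ∃ i, g.1 i = v).card)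
        - (if eps n g ((n - 1 : ℕ) : ZMod n) ≠ eps n g 0 then 1 else 0) := by
  set b : ZMod n → Bool := eps n g with hb
  set X : ℕ := (Finset.univ.filter fun v : ZMod n => ∃ i, g.1 i = v).card with hX
  -- sums of indicators
  set SR : ℕ := ∑ i : ZMod n, (if b i = false ∧ b (i+1) = true then 1 else 0) with hSR
  set SF : ℕ := ∑ i : ZMod n, (if b i = true ∧ b (i+1) = false then 1 else 0) with hSF
  set SC : ℕ := ∑ i : ZMod n, (if b i = true ∧ b (i+1) = true then 1 else 0) with hSC
  set T : ℕ := (Finset.univ.filter fun i : ZMod n => b i ≠ b (i+1)).card with hT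
  -- T = SR + SF
  have hTsum : T = SR + SF := by
    rw [hT, Finset.card_filter, hSR, hSF, ← Finset.sum_add_distrib]
    refine Finset.sum_congr rfl fun i _ => ?_
    cases hx : b i <;> cases hy : b (i+1) <;> simp [hx, hy]
  -- shift identity gives SR = SF
  have hRF : SR = SF := by
    have h1 : (Finset.univ.filter fun i : ZMod n => b (i+1) = true).card = SR + SC := by
      rw [Finset.card_filter, hSR, hSC, ← Finset.sum_add_distrib]
      refine Finset.sum_congr rfl fun i _ => ?_
      cases hx : b i <;> cases hy : b (i+1) <;> simp [hx, hy]
    have h2 : (Finset.univ.filter fun i : ZMod n => b i = true).card = SF + SC := by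
      rw [Finset.card_filter, hSF, hSC, ← Finset.sum_add_distrib]
      refine Finset.sum_congr rfl fun i _ => ?_
      cases hx : b i <;> cases hy : b (i+1) <;> simp [hx, hy]
    have := card_shift n b
    omega
  -- complement count: X + SF' = n where SF' counts v with b v ∧ ¬ b (v-1)
  have hcomplcard : X + (Finset.univ.filter fun v : ZMod n => ¬∃ i, g.1 i = v).card = n := by
    rw [hX, Finset.card_filter_add_card_filter_not, Finset.card_univ, ZMod.card]
  have hcomplset : (Finset.univ.filter fun v : ZMod n => ¬∃ i, g.1 i = v)
      = Finset.univ.filter fun v : ZMod n => b v = true ∧ b (v - 1) = false := by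
    ext v
    simp only [Finset.mem_filter, Finset.mem_univ, true_and]
    constructor
    · intro h
      constructor
      · rw [hb, eps_true_iff]
        rcases g.2 v with hv | hv
        · exact absurd ⟨v, hv⟩ h
        · exact hv
      · rw [hb, eps_false_iff n hn]
        rcases g.2 (v-1) with hv | hv
        · exact hv
        · exact absurd ⟨v - 1, by rw [hv, sub_add_cancel]⟩ h
    · rintro ⟨h1, h2⟩ ⟨i, hi⟩
      rw [hb, eps_true_iff] at h1
      rw [hb, eps_false_iff n hn] at h2
      rcases g.2 i with hgi | hgi
      · have hiv : i = v := by rw [hgi] at hi; exact hi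
        subst hiv
        rw [hgi] at h1
        exact self_ne_add_one n hn i h1
      · have hiv : i = v - 1 := by rw [hgi] at hi; exact eq_sub_of_add_eq hi
        subst hiv
        rw [h2] at hgi
        exact self_ne_add_one n hn (v-1) hgi
  have hcomplR : (Finset.univ.filter fun v : ZMod n => b v = true ∧ b (v - 1) = false).card = SR := by
    rw [hSR, ← Finset.card_filter]
    refine Finset.card_nbij' (fun v => v - 1) (fun i => i + 1) ?_ ?_ ?_ ?_ <;>
      intro v hv <;>
      simp only [Finset.mem_coe, Finset.mem_filter, Finset.mem_univ, true_and] at *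
    · rw [sub_add_cancel]; exact ⟨hv.2, hv.1⟩
    · rw [add_sub_cancel_right]; exact ⟨hv.2, hv.1⟩
    · exact sub_add_cancel v 1
    · exact add_sub_cancel_right v 1
  have hXR : X + SR = n := by
    rw [← hcomplR, ← hcomplset]; exact hcomplcard
  -- T as a sum over range n
  have hT2 : T = ((Finset.range n).filter fun k : ℕ =>
      b ((k : ℕ) : ZMod n) ≠ b (((k : ℕ) + 1 : ℕ) : ZMod n)).card := by
    rw [hT]
    refine Finset.card_nbij' (fun v : ZMod n => v.val) (fun k : ℕ => (k : ZMod n)) ?_ ?_ ?_ ?_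
    · intro v hv
      simp only [Finset.mem_coe, Finset.mem_filter, Finset.mem_univ, true_and, Finset.mem_range] at *
      refine ⟨ZMod.val_lt v, ?_⟩
      rw [ZMod.natCast_rightInverse v]
      push_cast
      rw [ZMod.natCast_rightInverse v]
      exact hv
    · intro k hk
      simp only [Finset.mem_coe, Finset.mem_filter, Finset.mem_univ, true_and, Finset.mem_range] at *
      have := hk.2
      push_cast at this
      exact this
    · intro v _
      exact ZMod.natCast_rightInverse v
    · intro k hk
      simp only [Finset.mem_coe, Finset.mem_filter, Finset.mem_range] at hk
      exact ZMod.val_cast_of_lt hk.1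
  -- split off the last index
  set c : ℕ := if b ((n - 1 : ℕ) : ZMod n) ≠ b 0 then 1 else 0 with hc
  have hsplit : T = Yb n b + c := by
    rw [hT2]
    have hrange : Finset.range n = insert (n-1) (Finset.range (n-1)) := by
      rw [← Finset.range_add_one]
      congr 1
      omega
    rw [hrange, Finset.filter_insert]
    have hlast : ((((n-1 : ℕ) + 1 : ℕ)) : ZMod n) = (0 : ZMod n) := by
      rw [show (n-1) + 1 = n by omega, ZMod.natCast_self]
    by_cases hP : b ((n - 1 : ℕ) : ZMod n) ≠ b ((((n-1 : ℕ) + 1 : ℕ)) : ZMod n)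
    · rw [if_pos hP, Finset.card_insert_of_notMem
        (fun hmem => Finset.notMem_range_self (Finset.mem_of_mem_filter _ hmem))]
      have : c = 1 := by rw [hc, if_pos (by rw [← hlast]; exact hP)]
      rw [this]
      rfl
    · rw [if_neg hP]
      have : c = 0 := by
        rw [hc, if_neg]
        rw [← hlast]
        exact hP
      rw [this, add_zero]
      rfl
  -- conclude
  have hgoal : Yb n b = 2 * (n - X) - c := by omega
  exact hgoal

end Cycle

section Main
variable (n : ℕ) [NeZero n]

lemma hY_entropy (hn : 3 ≤ n) :
    shannonEntropy (fun _ : Orient n => (1:ℝ)/2^n) (fun g => Yb n (eps n g))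
      = binomialEntropy (n-1) := by
  have hfib : ∀ k, (Finset.univ.filter fun g : Orient n => Yb n (eps n g) = k).card
      = 2 * (n-1).choose k := orient_count n hn
  have himg : Finset.univ.image (fun g : Orient n => Yb n (eps n g)) = Finset.range n := by
    ext k
    simp only [Finset.mem_image, Finset.mem_range, Finset.mem_univ, true_and]
    constructor
    · rintro ⟨g, rfl⟩
      have h1 : Yb n (eps n g) ≤ n - 1 := by
        unfold Yb
        exact le_of_le_of_eq (Finset.card_filter_le _ _) (Finset.card_range _)
      omega
    · intro hk
      have hpos : 0 < (Finset.univ.filter fun g : Orient n => Yb n (eps n g) = k).card := by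
        rw [hfib]
        have := Nat.choose_pos (show k ≤ n-1 by omega)
        omega
      obtain ⟨g, hg⟩ := Finset.card_pos.mp hpos
      exact ⟨g, (Finset.mem_filter.mp hg).2⟩
  have hq : ∀ k, (∑ _ω ∈ Finset.univ.filter (fun g : Orient n => Yb n (eps n g) = k),
      (1:ℝ)/2^n) = ((n-1).choose k : ℝ)/2^(n-1) := by
    intro k
    rw [Finset.sum_const, hfib k, nsmul_eq_mul]
    have h2 : (2:ℝ)^n = 2 * 2^(n-1) := by
      rw [← pow_succ']
      congr 1
      omega
    push_cast
    rw [h2]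
    have hne : (2:ℝ)^(n-1) ≠ 0 := by positivity
    field_simp
  unfold shannonEntropy binomialEntropy
  rw [himg, show (n-1)+1 = n by omega]
  congr 1
  refine Finset.sum_congr rfl fun k _ => ?_
  rw [hq k]

end Main

/-- Consider the cycle `C_n` (`n ≥ 3`) with vertex set `ZMod n` and edges `{i, i+1}`.
A random orientation assigns to each edge `{i, i+1}`, independently and uniformly,
one of its two endpoints; an orientation is an element `g` of the subtype
`{g : ZMod n → ZMod n // ∀ i, g i = i ∨ g i = i + 1}`, each having probability
`1 / 2 ^ n`.  If `X_{C_n}` is the number of vertices with nonzero in-degree, then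
`H(X_{C_n}) ≥ H(Bin(n-1, 1/2)) - 1`. -/
theorem cycle_entropy_ge_binomial (n : ℕ) [NeZero n] (hn : 3 ≤ n) :
    shannonEntropy
        (fun _ : {g : ZMod n → ZMod n // ∀ i, g i = i ∨ g i = i + 1} =>
          (1 : ℝ) / 2 ^ n)
        (fun g => (Finset.univ.filter fun v : ZMod n => ∃ i, g.1 i = v).card) ≥
      binomialEntropy (n - 1) - 1 := by
  set p : Orient n → ℝ := fun _ => (1:ℝ)/2^n with hpdef
  have hp : ∀ ω : Orient n, 0 ≤ p ω := fun ω => by rw [hpdef]; positivity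
  have hsum : ∑ ω : Orient n, p ω = 1 := by
    rw [hpdef, Finset.sum_const, Finset.card_univ, orient_card n hn, nsmul_eq_mul]
    push_cast
    field_simp
  have h1 : binomialEntropy (n-1) ≤ shannonEntropy p
      (fun g : Orient n => ((Finset.univ.filter fun v : ZMod n => ∃ i, g.1 i = v).card,
        decide (eps n g ((n - 1 : ℕ) : ZMod n) ≠ eps n g 0))) := by
    rw [← hY_entropy n hn]
    have hYZ : (fun g : Orient n => Yb n (eps n g))
        = (fun g : Orient n =>
            2 * (n - (Finset.univ.filter fun v : ZMod n => ∃ i, g.1 i = v).card)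
              - (if (decide (eps n g ((n - 1 : ℕ) : ZMod n) ≠ eps n g 0) : Bool)
                  then 1 else 0)) := by
      funext g
      rw [Ynum_eq n hn g]
      congr 1
      by_cases h : eps n g ((n - 1 : ℕ) : ZMod n) ≠ eps n g 0 <;> simp [h]
    rw [hYZ]
    exact shannonEntropy_comp_le p hp
      (fun g : Orient n => ((Finset.univ.filter fun v : ZMod n => ∃ i, g.1 i = v).card,
        decide (eps n g ((n - 1 : ℕ) : ZMod n) ≠ eps n g 0)))
      (fun s : ℕ × Bool => 2 * (n - s.1) - (if s.2 then 1 else 0))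
  have h2 : shannonEntropy p
      (fun g : Orient n => ((Finset.univ.filter fun v : ZMod n => ∃ i, g.1 i = v).card,
        decide (eps n g ((n - 1 : ℕ) : ZMod n) ≠ eps n g 0)))
      ≤ shannonEntropy p
          (fun g : Orient n => (Finset.univ.filter fun v : ZMod n => ∃ i, g.1 i = v).card)
        + 1 := by
    apply shannonEntropy_le_comp_add_one p hp hsum _ Prod.fst
    intro t
    have hle : ((Finset.univ.image
        (fun g : Orient n => ((Finset.univ.filter fun v : ZMod n => ∃ i, g.1 i = v).card,
          decide (eps n g ((n - 1 : ℕ) : ZMod n) ≠ eps n g 0)))).filter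
            (fun s => Prod.fst s = t)).card ≤ (Finset.univ : Finset Bool).card := by
      apply Finset.card_le_card_of_injOn (fun s => s.2) (fun _ _ => Finset.mem_univ _)
      intro s1 hs1 s2 hs2 hsnd
      have e1 : s1.1 = t := (Finset.mem_filter.mp hs1).2
      have e2 : s2.1 = t := (Finset.mem_filter.mp hs2).2
      exact Prod.ext (e1.trans e2.symm) hsnd
    simpa using hle
  linarith [h1, h2]
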